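/- arXiv:1906.08233 — 3 statements merged into one kernel-verified Lean document; each statement's English description precedes it below -/
import Mathlib

section
/- Let G be a group, n a positive integer, and φ : M → N a morphism of G-modules such that M and N are both n-divisible and φ restricts to an isomorphism of G-modules M[n] → N[n]. Assume moreover that the induced homomorphism M^G/n·M^G → N^G/n·N^G is zero. Then the kernel of the induced homomorphism H^1(G, M)[n] → H^1(G, N)[n] between n-torsion subgroups of first cohomology is isomorphic, as an abelian group, to N^G/n·N^G. -/
/-! Basic definitions: fixed points, n-torsion, first group cohomology of a
`G`-module (an abelian group with a `DistribMulAction` of `G`), functoriality,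
and the Kummer-theoretic connecting cocycle. -/

section Defs

variable (G : Type) [Group G]

/-- The subgroup of `G`-fixed points of a `G`-module `M`. -/
def fixedAddSubgroup (M : Type) [AddCommGroup M] [DistribMulAction G M] :
    AddSubgroup M where
  carrier := {x | ∀ g : G, g • x = x}
  zero_mem' := fun g => smul_zero g
  add_mem' := fun {a b} ha hb g => by rw [smul_add, ha g, hb g]
  neg_mem' := fun {a} ha g => by rw [smul_neg, ha g]

/-- The `n`-torsion subgroup `A[n]` of an abelian group `A`. -/
def nTorsion (A : Type) [AddCommGroup A] (n : ℕ) : AddSubgroup A where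
  carrier := {x | n • x = 0}
  zero_mem' := smul_zero n
  add_mem' := fun {a b} ha hb => by
    have ha' : n • a = 0 := ha
    have hb' : n • b = 0 := hb
    show n • (a + b) = 0
    rw [smul_add, ha', hb', add_zero]
  neg_mem' := fun {a} ha => by
    have ha' : n • a = 0 := ha
    show n • (-a) = 0
    rw [smul_neg, ha', neg_zero]

/-- The multiplication-by-`n` homomorphism of an abelian group. -/
def nsmulHom (A : Type) [AddCommGroup A] (n : ℕ) : A →+ A where
  toFun x := n • x
  map_zero' := smul_zero n
  map_add' := smul_add n

/-- The subgroup `n·A` of an abelian group `A`. -/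
def nMultiples (A : Type) [AddCommGroup A] (n : ℕ) : AddSubgroup A :=
  (nsmulHom A n).range

variable (M : Type) [AddCommGroup M] [DistribMulAction G M]

/-- The induced `G`-action on the `n`-torsion subgroup. -/
instance nTorsionAction (n : ℕ) : DistribMulAction G (nTorsion M n) where
  smul g x := ⟨g • (x : M), by
    have hx : n • (x : M) = 0 := x.2
    show n • (g • (x : M)) = 0
    rw [← smul_comm g n (x : M), hx, smul_zero]⟩
  one_smul x := Subtype.ext (one_smul G (x : M))
  mul_smul g h x := Subtype.ext (mul_smul g h (x : M))
  smul_zero g := Subtype.ext (smul_zero g)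
  smul_add g x y := Subtype.ext (smul_add g (x : M) (y : M))

@[simp] lemma nTorsion_smul_coe (n : ℕ) (g : G) (x : nTorsion M n) :
    ((g • x : nTorsion M n) : M) = g • (x : M) := rfl

/-- The group of (inhomogeneous) 1-cocycles of `G` with coefficients in `M`. -/
def oneCocycles : AddSubgroup (G → M) where
  carrier := {f | ∀ σ τ : G, f (σ * τ) = f σ + σ • f τ}
  zero_mem' := fun σ τ => by simp
  add_mem' := fun {a b} ha hb σ τ => by
    simp only [Pi.add_apply, ha σ τ, hb σ τ, smul_add]
    abel
  neg_mem' := fun {a} ha σ τ => by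
    simp only [Pi.neg_apply, ha σ τ, smul_neg]
    abel

/-- The group of 1-coboundaries of `G` with coefficients in `M`. -/
def oneCoboundaries : AddSubgroup (G → M) where
  carrier := {f | ∃ x : M, ∀ σ : G, f σ = σ • x - x}
  zero_mem' := ⟨0, fun σ => by simp⟩
  add_mem' := by
    rintro a b ⟨x, hx⟩ ⟨y, hy⟩
    exact ⟨x + y, fun σ => by rw [Pi.add_apply, hx σ, hy σ, smul_add]; abel⟩
  neg_mem' := by
    rintro a ⟨x, hx⟩
    exact ⟨-x, fun σ => by rw [Pi.neg_apply, hx σ, smul_neg]; abel⟩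

/-- The first group cohomology `H¹(G, M)`, defined as 1-cocycles modulo
1-coboundaries. -/
abbrev H1 := oneCocycles G M ⧸ ((oneCoboundaries G M).addSubgroupOf (oneCocycles G M))

/-- The class of a 1-cocycle in `H¹(G, M)`. -/
def H1mk : oneCocycles G M → H1 G M := QuotientAddGroup.mk

variable {G M}
variable {N : Type} [AddCommGroup N] [DistribMulAction G N]

/-- The map on 1-cocycles induced by a `G`-equivariant homomorphism. -/
def oneCocyclesMap (φ : M →+ N) (hφ : ∀ (g : G) (x : M), φ (g • x) = g • φ x) :
    oneCocycles G M →+ oneCocycles G N where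
  toFun f := ⟨fun σ => φ ((f : G → M) σ), fun σ τ => by
    show φ ((f : G → M) (σ * τ)) = φ ((f : G → M) σ) + σ • φ ((f : G → M) τ)
    rw [f.2 σ τ, map_add, hφ]⟩
  map_zero' := by
    apply Subtype.ext
    funext σ
    simp
  map_add' f₁ f₂ := by
    apply Subtype.ext
    funext σ
    simp

/-- The map on `H¹` induced by a `G`-equivariant homomorphism. -/
def H1Map (φ : M →+ N) (hφ : ∀ (g : G) (x : M), φ (g • x) = g • φ x) :
    H1 G M →+ H1 G N :=
  QuotientAddGroup.map _ _ (oneCocyclesMap φ hφ) (by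
    rintro ⟨f, hf⟩ hmem
    rw [AddSubgroup.mem_addSubgroupOf] at hmem
    obtain ⟨x, hx⟩ := hmem
    rw [AddSubgroup.mem_comap, AddSubgroup.mem_addSubgroupOf]
    refine ⟨φ x, fun σ => ?_⟩
    show φ (f σ) = σ • φ x - φ x
    have hx' : f σ = σ • x - x := hx σ
    rw [hx', map_sub, hφ])

variable (G M)

/-- The Kummer cocycle attached to `y` with `n • y` a fixed point: the 1-cocycle
`σ ↦ σ • y - y` with values in the `n`-torsion of `M`. -/
def kummerCocycle (n : ℕ) (y : M) (hy : (n • y) ∈ fixedAddSubgroup G M) :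
    oneCocycles G (nTorsion M n) :=
  ⟨fun σ => ⟨σ • y - y, by
      show n • (σ • y - y) = 0
      rw [smul_sub, ← smul_comm σ n y, hy σ, sub_self]⟩,
   fun σ τ => by
      apply Subtype.ext
      show (σ * τ) • y - y = (σ • y - y) + σ • (τ • y - y)
      rw [mul_smul, smul_sub]
      abel⟩

end Defs
section Maps

variable {G : Type} [Group G]

/-- A homomorphism of abelian groups restricts to the `n`-torsion subgroups. -/
def torsMap {A B : Type} [AddCommGroup A] [AddCommGroup B] (n : ℕ) (f : A →+ B) :
    ↥(nTorsion A n) →+ ↥(nTorsion B n) where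
  toFun x := ⟨f (x : A), by
    have hx : n • (x : A) = 0 := x.2
    show n • f (x : A) = 0
    rw [← map_nsmul f, hx, map_zero]⟩
  map_zero' := Subtype.ext (map_zero f)
  map_add' a b := Subtype.ext (map_add f (a : A) (b : A))

/-- A `G`-equivariant homomorphism restricts to the subgroups of fixed
points. -/
def fixedMap {M N : Type} [AddCommGroup M] [DistribMulAction G M]
    [AddCommGroup N] [DistribMulAction G N]
    (φ : M →+ N) (hφ : ∀ (g : G) (x : M), φ (g • x) = g • φ x) :
    ↥(fixedAddSubgroup G M) →+ ↥(fixedAddSubgroup G N) where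
  toFun x := ⟨φ (x : M), fun g => by
    have hx : ∀ g : G, g • (x : M) = (x : M) := x.2
    rw [← hφ g (x : M), hx g]⟩
  map_zero' := Subtype.ext (map_zero φ)
  map_add' a b := Subtype.ext (map_add φ (a : M) (b : M))

end Maps

section ProofAux

variable {G M N : Type} [Group G] [AddCommGroup M] [DistribMulAction G M]
  [AddCommGroup N] [DistribMulAction G N] {n : ℕ}
  (φ : M →+ N) (hφ : ∀ (g : G) (x : M), φ (g • x) = g • φ x)
  (hbij : Set.BijOn φ (nTorsion M n : Set M) (nTorsion N n : Set N))

/-- The restriction of `φ` to the `n`-torsion subgroups, as an `AddEquiv`. -/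
noncomputable def torsAddEquiv : ↥(nTorsion M n) ≃+ ↥(nTorsion N n) :=
  { Set.BijOn.equiv φ hbij with
    map_add' := fun a b => Subtype.ext (map_add φ (a : M) (b : M)) }

/-- The inverse of `φ` on `n`-torsion, as an `AddMonoidHom`. -/
noncomputable def torsInv : ↥(nTorsion N n) →+ ↥(nTorsion M n) :=
  (torsAddEquiv φ hbij).symm.toAddMonoidHom

lemma phi_torsInv (y : ↥(nTorsion N n)) :
    φ ((torsInv φ hbij y : ↥(nTorsion M n)) : M) = (y : N) :=
  congrArg Subtype.val ((torsAddEquiv φ hbij).apply_symm_apply y)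

include hφ in
lemma torsInv_smul (g : G) (y : ↥(nTorsion N n)) :
    torsInv φ hbij (g • y) = g • torsInv φ hbij y := by
  apply (torsAddEquiv φ hbij).injective
  rw [show torsInv φ hbij (g • y) = (torsAddEquiv φ hbij).symm (g • y) from rfl,
    AddEquiv.apply_symm_apply]
  apply Subtype.ext
  show g • (y : N) = φ ((g • torsInv φ hbij y : ↥(nTorsion M n)) : M)
  rw [nTorsion_smul_coe, hφ, phi_torsInv]

lemma smul_sub_mem_nTorsion {w : N} (hw : n • w ∈ fixedAddSubgroup G N) (σ : G) :
    σ • w - w ∈ nTorsion N n := by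
  show n • (σ • w - w) = 0
  rw [smul_sub, ← smul_comm σ n w, hw σ, sub_self]

/-- The Kummer cocycle of `w`, pulled back through `φ⁻¹` on torsion and
included into `M`. -/
noncomputable def kumM (w : N) (hw : n • w ∈ fixedAddSubgroup G N) :
    oneCocycles G M :=
  oneCocyclesMap (nTorsion M n).subtype (fun _ _ => by exact rfl)
    (oneCocyclesMap (torsInv φ hbij) (torsInv_smul φ hφ hbij)
      (kummerCocycle G N n w hw))

lemma kumM_apply (w : N) (hw : n • w ∈ fixedAddSubgroup G N) (σ : G) :
    (kumM φ hφ hbij w hw : G → M) σ =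
      (torsInv φ hbij ⟨σ • w - w, smul_sub_mem_nTorsion hw σ⟩ : M) := rfl

lemma phi_kumM (w : N) (hw : n • w ∈ fixedAddSubgroup G N) (σ : G) :
    φ ((kumM φ hφ hbij w hw : G → M) σ) = σ • w - w := by
  rw [kumM_apply, phi_torsInv]

lemma kumM_tors (w : N) (hw : n • w ∈ fixedAddSubgroup G N) :
    n • kumM φ hφ hbij w hw = 0 := by
  apply Subtype.ext; funext σ
  show n • ((kumM φ hφ hbij w hw : G → M) σ) = 0
  rw [kumM_apply]
  exact (torsInv φ hbij ⟨σ • w - w, smul_sub_mem_nTorsion hw σ⟩).2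

lemma kumM_indep (w w' : N) (hw : n • w ∈ fixedAddSubgroup G N)
    (hw' : n • w' ∈ fixedAddSubgroup G N) (h : n • w = n • w') :
    H1mk G M (kumM φ hφ hbij w hw) = H1mk G M (kumM φ hφ hbij w' hw') := by
  have hd : w' - w ∈ nTorsion N n := by
    show n • (w' - w) = 0
    rw [smul_sub, h, sub_self]
  show (QuotientAddGroup.mk _ : H1 G M) = QuotientAddGroup.mk _
  rw [QuotientAddGroup.eq, AddSubgroup.mem_addSubgroupOf]
  refine ⟨(torsInv φ hbij ⟨w' - w, hd⟩ : M), fun σ => ?_⟩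
  have e1 : (⟨σ • w' - w', smul_sub_mem_nTorsion hw' σ⟩ : ↥(nTorsion N n))
      = ⟨σ • w - w, smul_sub_mem_nTorsion hw σ⟩
        + (σ • (⟨w' - w, hd⟩ : ↥(nTorsion N n)) - ⟨w' - w, hd⟩) := by
    apply Subtype.ext
    show σ • w' - w' = (σ • w - w) + (σ • (w' - w) - (w' - w))
    rw [smul_sub]; abel
  show -((kumM φ hφ hbij w hw : G → M) σ) + (kumM φ hφ hbij w' hw' : G → M) σ = _
  rw [kumM_apply, kumM_apply, e1, map_add, map_sub, torsInv_smul φ hφ hbij]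
  simp only [AddSubgroup.coe_add, AddSubgroup.coe_sub, nTorsion_smul_coe]
  abel

include hφ in
lemma kumM_add (w w' : N) (hw : n • w ∈ fixedAddSubgroup G N)
    (hw' : n • w' ∈ fixedAddSubgroup G N)
    (hww' : n • (w + w') ∈ fixedAddSubgroup G N) :
    kumM φ hφ hbij (w + w') hww' = kumM φ hφ hbij w hw + kumM φ hφ hbij w' hw' := by
  apply Subtype.ext; funext σ
  show (kumM φ hφ hbij (w + w') hww' : G → M) σ
    = (kumM φ hφ hbij w hw : G → M) σ + (kumM φ hφ hbij w' hw' : G → M) σ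
  rw [kumM_apply, kumM_apply, kumM_apply]
  have e1 : (⟨σ • (w + w') - (w + w'), smul_sub_mem_nTorsion hww' σ⟩ : ↥(nTorsion N n))
      = ⟨σ • w - w, smul_sub_mem_nTorsion hw σ⟩
        + ⟨σ • w' - w', smul_sub_mem_nTorsion hw' σ⟩ := by
    apply Subtype.ext
    show σ • (w + w') - (w + w') = (σ • w - w) + (σ • w' - w')
    rw [smul_add]; abel
  rw [e1, map_add, AddSubgroup.coe_add]

lemma H1mk_nsmul (k : ℕ) (f : oneCocycles G M) :
    k • H1mk G M f = H1mk G M (k • f) :=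
  (map_nsmul (QuotientAddGroup.mk'
    ((oneCoboundaries G M).addSubgroupOf (oneCocycles G M))) k f).symm

lemma H1mk_add (f f' : oneCocycles G M) :
    H1mk G M (f + f') = H1mk G M f + H1mk G M f' := rfl

lemma H1mk_eq_zero_iff (f : oneCocycles G M) :
    H1mk G M f = 0 ↔ (f : G → M) ∈ oneCoboundaries G M := by
  rw [show H1mk G M f = (QuotientAddGroup.mk f : H1 G M) from rfl,
    QuotientAddGroup.eq_zero_iff, AddSubgroup.mem_addSubgroupOf]

include hφ in
lemma kumM_tors_class (w : N) (hw : n • w ∈ fixedAddSubgroup G N) :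
    n • H1mk G M (kumM φ hφ hbij w hw) = 0 := by
  rw [H1mk_nsmul, kumM_tors]
  rfl

include hφ in
lemma H1Map_H1mk (f : oneCocycles G M) :
    H1Map φ hφ (H1mk G M f) = H1mk G N (oneCocyclesMap φ hφ f) := rfl

include hφ in
lemma kumM_ker_class (w : N) (hw : n • w ∈ fixedAddSubgroup G N) :
    H1Map φ hφ (H1mk G M (kumM φ hφ hbij w hw)) = 0 := by
  rw [H1Map_H1mk, H1mk_eq_zero_iff]
  exact ⟨w, fun σ => phi_kumM φ hφ hbij w hw σ⟩

/-- The connecting map `N^G → H¹(G, M)`. -/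
noncomputable def psi0 (hdivN : ∀ x : N, ∃ y : N, n • y = x)
    (z : ↥(fixedAddSubgroup G N)) : H1 G M :=
  H1mk G M (kumM φ hφ hbij (hdivN (z : N)).choose
    (by rw [(hdivN (z : N)).choose_spec]; exact z.2))

lemma psi0_spec (hdivN : ∀ x : N, ∃ y : N, n • y = x)
    (z : ↥(fixedAddSubgroup G N)) (w : N) (hw : n • w ∈ fixedAddSubgroup G N)
    (hwz : n • w = (z : N)) :
    psi0 φ hφ hbij hdivN z = H1mk G M (kumM φ hφ hbij w hw) :=
  kumM_indep φ hφ hbij _ w _ hw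
    (((hdivN (z : N)).choose_spec).trans hwz.symm)

include hφ in
lemma kumM_val_tors (w : N) (hw : n • w ∈ fixedAddSubgroup G N) (σ : G) :
    n • ((kumM φ hφ hbij w hw : G → M) σ) = 0 := by
  rw [kumM_apply]
  exact (torsInv φ hbij ⟨σ • w - w, smul_sub_mem_nTorsion hw σ⟩).2

include hφ in
lemma kumM_fixed (w : N) (hwfix : w ∈ fixedAddSubgroup G N)
    (hw : n • w ∈ fixedAddSubgroup G N) : kumM φ hφ hbij w hw = 0 := by
  apply Subtype.ext; funext σ
  show (kumM φ hφ hbij w hw : G → M) σ = 0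
  rw [kumM_apply]
  have h0 : (⟨σ • w - w, smul_sub_mem_nTorsion hw σ⟩ : ↥(nTorsion N n)) = 0 :=
    Subtype.ext (by show σ • w - w = 0; rw [hwfix σ, sub_self])
  rw [h0, map_zero]
  rfl

lemma psi0_tors (hdivN : ∀ x : N, ∃ y : N, n • y = x)
    (z : ↥(fixedAddSubgroup G N)) : n • psi0 φ hφ hbij hdivN z = 0 :=
  kumM_tors_class φ hφ hbij _ _

lemma psi0_ker (hdivN : ∀ x : N, ∃ y : N, n • y = x)
    (z : ↥(fixedAddSubgroup G N)) : H1Map φ hφ (psi0 φ hφ hbij hdivN z) = 0 :=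
  kumM_ker_class φ hφ hbij _ _

lemma psi0_zero (hdivN : ∀ x : N, ∃ y : N, n • y = x) :
    psi0 φ hφ hbij hdivN 0 = 0 := by
  have h0 : n • (0 : N) ∈ fixedAddSubgroup G N := by
    rw [smul_zero]; exact (fixedAddSubgroup G N).zero_mem
  rw [psi0_spec φ hφ hbij hdivN 0 0 h0 (by rw [smul_zero]; rfl),
    kumM_fixed φ hφ hbij 0 (fixedAddSubgroup G N).zero_mem h0]
  rfl

lemma psi0_add (hdivN : ∀ x : N, ∃ y : N, n • y = x)
    (z z' : ↥(fixedAddSubgroup G N)) :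
    psi0 φ hφ hbij hdivN (z + z')
      = psi0 φ hφ hbij hdivN z + psi0 φ hφ hbij hdivN z' := by
  obtain ⟨w, hw⟩ := hdivN (z : N)
  obtain ⟨w', hw'⟩ := hdivN (z' : N)
  have hwf : n • w ∈ fixedAddSubgroup G N := by rw [hw]; exact z.2
  have hw'f : n • w' ∈ fixedAddSubgroup G N := by rw [hw']; exact z'.2
  have hwwf : n • (w + w') ∈ fixedAddSubgroup G N := by
    rw [smul_add, hw, hw']
    exact (fixedAddSubgroup G N).add_mem z.2 z'.2
  rw [psi0_spec φ hφ hbij hdivN (z + z') (w + w') hwwf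
      (by rw [smul_add, hw, hw']; rfl),
    psi0_spec φ hφ hbij hdivN z w hwf hw,
    psi0_spec φ hφ hbij hdivN z' w' hw'f hw',
    kumM_add φ hφ hbij w w' hwf hw'f hwwf, H1mk_add]

end ProofAux
/-- Let `φ : M → N` be a morphism of `n`-divisible `G`-modules
restricting to an isomorphism `M[n] → N[n]`, and suppose the induced map
`M^G/n·M^G → N^G/n·N^G` is zero. Then the kernel of the induced homomorphism
`H¹(G, M)[n] → H¹(G, N)[n]` is isomorphic to `N^G/n·N^G`. -/
theorem ker_H1_torsion_map_iso_fixed_quotient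
    (G M N : Type) [Group G] [AddCommGroup M] [DistribMulAction G M]
    [AddCommGroup N] [DistribMulAction G N] (n : ℕ) (hn : 0 < n)
    (φ : M →+ N) (hφ : ∀ (g : G) (x : M), φ (g • x) = g • φ x)
    (hdivM : ∀ x : M, ∃ y : M, n • y = x) (hdivN : ∀ x : N, ∃ y : N, n • y = x)
    (hbij : Set.BijOn φ (nTorsion M n : Set M) (nTorsion N n : Set N))
    (hzero : ∀ x : M, x ∈ fixedAddSubgroup G M →
      ∃ y ∈ fixedAddSubgroup G N, n • y = φ x) :
    Nonempty (↥((torsMap n (H1Map (G := G) φ hφ)).ker) ≃+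
      (↥(fixedAddSubgroup G N) ⧸ nMultiples ↥(fixedAddSubgroup G N) n)) := by
  classical
  -- the connecting homomorphism ψ : N^G → ker(H¹(G,M)[n] → H¹(G,N)[n])
  let ψ : ↥(fixedAddSubgroup G N) →+ ↥((torsMap n (H1Map (G := G) φ hφ)).ker) :=
    { toFun := fun z => ⟨⟨psi0 φ hφ hbij hdivN z, psi0_tors φ hφ hbij hdivN z⟩,
        by
          rw [AddMonoidHom.mem_ker]
          exact Subtype.ext (psi0_ker φ hφ hbij hdivN z)⟩
      map_zero' := by
        apply Subtype.ext; apply Subtype.ext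
        exact psi0_zero φ hφ hbij hdivN
      map_add' := fun z z' => by
        apply Subtype.ext; apply Subtype.ext
        exact psi0_add φ hφ hbij hdivN z z' }
  -- surjectivity of ψ
  have hsurj : Function.Surjective ψ := by
    rintro ⟨⟨c, hc⟩, hkc⟩
    obtain ⟨f, rfl⟩ := QuotientAddGroup.mk_surjective c
    -- the class of f is n-torsion: n • f is a coboundary σ • m - m
    have hc' : H1mk G M (n • f) = 0 := by
      rw [← H1mk_nsmul]; exact hc
    rw [H1mk_eq_zero_iff] at hc'
    obtain ⟨m, hm⟩ := hc'
    obtain ⟨y, hy⟩ := hdivM m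
    -- the coboundary of y, as a cocycle
    let cb : oneCocycles G M := ⟨fun σ => σ • y - y, fun σ τ => by
      show (σ * τ) • y - y = (σ • y - y) + σ • (τ • y - y)
      rw [mul_smul, smul_sub]; abel⟩
    -- f - cb has values in the n-torsion of M
    have hval : ∀ σ : G, ((f - cb : oneCocycles G M) : G → M) σ ∈ nTorsion M n := by
      intro σ
      have h1 : n • (f : G → M) σ = σ • m - m := hm σ
      show n • ((f : G → M) σ - (σ • y - y)) = 0
      rw [smul_sub, h1, smul_sub, smul_comm n σ y, hy]
      abel
    have hcls : H1mk G M (f - cb) = H1mk G M f := by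
      show (QuotientAddGroup.mk _ : H1 G M) = QuotientAddGroup.mk _
      rw [QuotientAddGroup.eq, AddSubgroup.mem_addSubgroupOf]
      refine ⟨y, fun σ => ?_⟩
      show -((f : G → M) σ - (σ • y - y)) + (f : G → M) σ = σ • y - y
      abel
    -- the image of f in H¹(G, N) vanishes: φ ∘ f is the coboundary of some x
    have hkc' : H1Map φ hφ (H1mk G M f) = 0 := congrArg Subtype.val hkc
    rw [H1Map_H1mk, H1mk_eq_zero_iff] at hkc'
    obtain ⟨x, hx⟩ := hkc'
    have hx' : ∀ σ : G, φ ((f : G → M) σ) = σ • x - x := hx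
    set v : N := x - φ y with hv_def
    have hv : ∀ σ : G, φ (((f - cb : oneCocycles G M) : G → M) σ) = σ • v - v := by
      intro σ
      show φ ((f : G → M) σ - (σ • y - y)) = σ • (x - φ y) - (x - φ y)
      rw [map_sub, hx' σ, map_sub, hφ, smul_sub]
      abel
    have hzfix : (n • v) ∈ fixedAddSubgroup G N := by
      intro g
      have h3 : n • (g • v) - n • v = 0 := by
        rw [← smul_sub, ← hv g, ← map_nsmul φ,
          show n • ((f - cb : oneCocycles G M) : G → M) g = 0 from hval g, map_zero]
      rw [smul_comm g n v]
      exact sub_eq_zero.mp h3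
    refine ⟨⟨n • v, hzfix⟩, ?_⟩
    apply Subtype.ext; apply Subtype.ext
    show psi0 φ hφ hbij hdivN ⟨n • v, hzfix⟩ = QuotientAddGroup.mk f
    rw [psi0_spec φ hφ hbij hdivN ⟨n • v, hzfix⟩ v hzfix rfl]
    have hkv : kumM φ hφ hbij v hzfix = f - cb := by
      apply Subtype.ext; funext σ
      show (kumM φ hφ hbij v hzfix : G → M) σ = ((f - cb : oneCocycles G M) : G → M) σ
      rw [kumM_apply]
      have h4 : torsInv φ hbij ⟨σ • v - v, smul_sub_mem_nTorsion hzfix σ⟩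
          = ⟨((f - cb : oneCocycles G M) : G → M) σ, hval σ⟩ :=
        (torsAddEquiv φ hbij).symm_apply_eq.mpr (Subtype.ext (hv σ).symm)
      rw [h4]
    rw [hkv]
    exact hcls
  -- the kernel of ψ is n·N^G
  have hker : ψ.ker = nMultiples (↥(fixedAddSubgroup G N)) n := by
    ext z
    constructor
    · intro hz
      rw [AddMonoidHom.mem_ker] at hz
      have hz0 : psi0 φ hφ hbij hdivN z = 0 :=
        congrArg (fun k : ↥((torsMap n (H1Map (G := G) φ hφ)).ker) =>
          ((k : ↥(nTorsion (H1 G M) n)) : H1 G M)) hz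
      obtain ⟨w, hw⟩ := hdivN (z : N)
      have hwfix : n • w ∈ fixedAddSubgroup G N := by rw [hw]; exact z.2
      rw [psi0_spec φ hφ hbij hdivN z w hwfix hw, H1mk_eq_zero_iff] at hz0
      obtain ⟨x, hx⟩ := hz0
      have hphi : ∀ σ : G, σ • w - w = σ • φ x - φ x := by
        intro σ
        rw [← phi_kumM φ hφ hbij w hwfix σ, hx σ, map_sub, hφ]
      have hu : w - φ x ∈ fixedAddSubgroup G N := by
        intro g
        have h := hphi g
        rw [sub_eq_sub_iff_sub_eq_sub] at h
        rw [smul_sub]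
        exact h
      have hnx : n • x ∈ fixedAddSubgroup G M := by
        intro g
        have h2 : n • (g • x - x) = 0 := by
          rw [← hx g]
          exact kumM_val_tors φ hφ hbij w hwfix g
        rw [smul_sub] at h2
        rw [smul_comm g n x]
        exact sub_eq_zero.mp h2
      obtain ⟨y₀, hy₀fix, hy₀⟩ := hzero (n • x) hnx
      refine ⟨⟨(w - φ x) + y₀, (fixedAddSubgroup G N).add_mem hu hy₀fix⟩, ?_⟩
      apply Subtype.ext
      show n • ((w - φ x) + y₀) = (z : N)
      rw [smul_add, smul_sub, hy₀, ← map_nsmul φ, hw]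
      abel
    · rintro ⟨y, rfl⟩
      rw [AddMonoidHom.mem_ker]
      apply Subtype.ext; apply Subtype.ext
      show psi0 φ hφ hbij hdivN (nsmulHom (↥(fixedAddSubgroup G N)) n y) = 0
      have hyfix : n • (y : N) ∈ fixedAddSubgroup G N :=
        (n • y : ↥(fixedAddSubgroup G N)).2
      rw [psi0_spec φ hφ hbij hdivN (nsmulHom (↥(fixedAddSubgroup G N)) n y)
          (y : N) hyfix rfl,
        kumM_fixed φ hφ hbij (y : N) y.2 hyfix]
      rfl
  exact ⟨(QuotientAddGroup.quotientKerEquivOfSurjective ψ hsurj).symm.trans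
    (QuotientAddGroup.quotientAddEquivOfEq hker)⟩
end

section
/- Let G be a group, n a positive integer, and φ : M → N a morphism of G-modules such that M and N are both n-divisible and φ restricts to an isomorphism of G-modules M[n] → N[n]. Then the kernel of the induced homomorphism H^1(G, M)[n] → H^1(G, N)[n] between n-torsion subgroups of first cohomology is isomorphic, as an abelian group, to the cokernel of the induced homomorphism M^G/n·M^G → N^G/n·N^G. -/
section Aux

variable {G M N : Type} [Group G] [AddCommGroup M] [DistribMulAction G M]
  [AddCommGroup N] [DistribMulAction G N]

lemma phi_inj (n : ℕ) (φ : M →+ N)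
    (hbij : Set.BijOn φ (nTorsion M n : Set M) (nTorsion N n : Set N))
    {a b : M} (ha : n • a = 0) (hb : n • b = 0) (h : φ a = φ b) : a = b :=
  hbij.injOn ha hb h

/-- Inverse on `n`-torsion. -/
noncomputable def psi (n : ℕ) (φ : M →+ N)
    (hbij : Set.BijOn φ (nTorsion M n : Set M) (nTorsion N n : Set N))
    (u : N) (hu : n • u = 0) : M :=
  (hbij.surjOn hu).choose

lemma psi_tors (n : ℕ) (φ : M →+ N)
    (hbij : Set.BijOn φ (nTorsion M n : Set M) (nTorsion N n : Set N))
    (u : N) (hu : n • u = 0) : n • psi n φ hbij u hu = 0 :=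
  (hbij.surjOn hu).choose_spec.1

lemma psi_spec (n : ℕ) (φ : M →+ N)
    (hbij : Set.BijOn φ (nTorsion M n : Set M) (nTorsion N n : Set N))
    (u : N) (hu : n • u = 0) : φ (psi n φ hbij u hu) = u :=
  (hbij.surjOn hu).choose_spec.2

lemma psi_eq (n : ℕ) (φ : M →+ N)
    (hbij : Set.BijOn φ (nTorsion M n : Set M) (nTorsion N n : Set N))
    {u : N} {hu : n • u = 0} {a : M} (ha : n • a = 0) (h : φ a = u) :
    psi n φ hbij u hu = a :=
  phi_inj n φ hbij (psi_tors n φ hbij u hu) ha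
    (by rw [psi_spec n φ hbij u hu, h])

/-- The pulled-back Kummer cocycle with values in `M`. -/
noncomputable def pullCocycle (n : ℕ) (φ : M →+ N)
    (hφ : ∀ (g : G) (x : M), φ (g • x) = g • φ x)
    (hbij : Set.BijOn φ (nTorsion M n : Set M) (nTorsion N n : Set N))
    (y : N) (hy : ∀ g : G, g • (n • y) = n • y) :
    oneCocycles G M :=
  ⟨fun σ => psi n φ hbij (σ • y - y)
      (by rw [smul_sub, smul_comm n σ y, hy σ, sub_self]),
   by
    intro σ τ
    dsimp only
    apply phi_inj n φ hbij
    · exact psi_tors n φ hbij _ _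
    · rw [smul_add, psi_tors n φ hbij, smul_comm n σ, psi_tors n φ hbij,
        smul_zero, add_zero]
    · rw [map_add, hφ, psi_spec n φ hbij, psi_spec n φ hbij, psi_spec n φ hbij,
        mul_smul, smul_sub]
      abel⟩

lemma pullCocycle_apply (n : ℕ) (φ : M →+ N)
    (hφ : ∀ (g : G) (x : M), φ (g • x) = g • φ x)
    (hbij : Set.BijOn φ (nTorsion M n : Set M) (nTorsion N n : Set N))
    (y : N) (hy : ∀ g : G, g • (n • y) = n • y) (σ : G) :
    ((pullCocycle n φ hφ hbij y hy : oneCocycles G M) : G → M) σ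
      = psi n φ hbij (σ • y - y)
        (by rw [smul_sub, smul_comm n σ y, hy σ, sub_self]) := rfl

lemma pullCocycle_tors (n : ℕ) (φ : M →+ N)
    (hφ : ∀ (g : G) (x : M), φ (g • x) = g • φ x)
    (hbij : Set.BijOn φ (nTorsion M n : Set M) (nTorsion N n : Set N))
    (y : N) (hy : ∀ g : G, g • (n • y) = n • y) :
    n • pullCocycle n φ hφ hbij y hy = 0 := by
  apply Subtype.ext
  funext σ
  show n • ((pullCocycle n φ hφ hbij y hy : oneCocycles G M) : G → M) σ = 0
  rw [pullCocycle_apply, psi_tors]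

lemma pullCocycle_indep (n : ℕ) (φ : M →+ N)
    (hφ : ∀ (g : G) (x : M), φ (g • x) = g • φ x)
    (hbij : Set.BijOn φ (nTorsion M n : Set M) (nTorsion N n : Set N))
    (y y' : N) (hy : ∀ g : G, g • (n • y) = n • y)
    (hy' : ∀ g : G, g • (n • y') = n • y') (h : n • y = n • y') :
    H1mk G M (pullCocycle n φ hφ hbij y hy)
      = H1mk G M (pullCocycle n φ hφ hbij y' hy') := by
  have htors : n • (y - y') = 0 := by rw [smul_sub, h, sub_self]
  apply (QuotientAddGroup.eq_iff_sub_mem).2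
  rw [AddSubgroup.mem_addSubgroupOf]
  refine ⟨psi n φ hbij (y - y') htors, fun σ => ?_⟩
  show (pullCocycle n φ hφ hbij y hy : G → M) σ
      - (pullCocycle n φ hφ hbij y' hy' : G → M) σ = _
  rw [pullCocycle_apply, pullCocycle_apply]
  apply phi_inj n φ hbij
  · rw [smul_sub, psi_tors n φ hbij, psi_tors n φ hbij, sub_self]
  · rw [smul_sub, smul_comm n σ, psi_tors n φ hbij, smul_zero, sub_zero]
  · rw [map_sub, map_sub, hφ, psi_spec n φ hbij,
      psi_spec n φ hbij, psi_spec n φ hbij, smul_sub]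
    abel

lemma pullCocycle_add (n : ℕ) (φ : M →+ N)
    (hφ : ∀ (g : G) (x : M), φ (g • x) = g • φ x)
    (hbij : Set.BijOn φ (nTorsion M n : Set M) (nTorsion N n : Set N))
    (y y' : N) (hy : ∀ g : G, g • (n • y) = n • y)
    (hy' : ∀ g : G, g • (n • y') = n • y')
    (hyy' : ∀ g : G, g • (n • (y + y')) = n • (y + y')) :
    pullCocycle n φ hφ hbij (y + y') hyy'
      = pullCocycle n φ hφ hbij y hy + pullCocycle n φ hφ hbij y' hy' := by
  apply Subtype.ext
  funext σ
  show (pullCocycle n φ hφ hbij (y + y') hyy' : G → M) σ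
    = (pullCocycle n φ hφ hbij y hy : G → M) σ
      + (pullCocycle n φ hφ hbij y' hy' : G → M) σ
  rw [pullCocycle_apply, pullCocycle_apply, pullCocycle_apply]
  apply psi_eq n φ hbij
  · rw [smul_add, psi_tors n φ hbij, psi_tors n φ hbij, add_zero]
  · rw [map_add, psi_spec n φ hbij, psi_spec n φ hbij, smul_add]
    abel

/-- The connecting map `N^G → H¹(G, M)`. -/
noncomputable def thetaFun (n : ℕ) (φ : M →+ N)
    (hφ : ∀ (g : G) (x : M), φ (g • x) = g • φ x)
    (hbij : Set.BijOn φ (nTorsion M n : Set M) (nTorsion N n : Set N))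
    (hdivN : ∀ x : N, ∃ y : N, n • y = x)
    (b : ↥(fixedAddSubgroup G N)) : H1 G M :=
  H1mk G M (pullCocycle n φ hφ hbij (hdivN (b : N)).choose
    (fun g => by rw [(hdivN (b : N)).choose_spec]; exact b.2 g))

lemma thetaFun_eq (n : ℕ) (φ : M →+ N)
    (hφ : ∀ (g : G) (x : M), φ (g • x) = g • φ x)
    (hbij : Set.BijOn φ (nTorsion M n : Set M) (nTorsion N n : Set N))
    (hdivN : ∀ x : N, ∃ y : N, n • y = x)
    (b : ↥(fixedAddSubgroup G N)) (y : N) (hy : n • y = (b : N)) :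
    thetaFun n φ hφ hbij hdivN b
      = H1mk G M (pullCocycle n φ hφ hbij y
          (fun g => by rw [hy]; exact b.2 g)) := by
  apply pullCocycle_indep
  rw [(hdivN (b : N)).choose_spec, hy]

lemma thetaFun_tors (n : ℕ) (φ : M →+ N)
    (hφ : ∀ (g : G) (x : M), φ (g • x) = g • φ x)
    (hbij : Set.BijOn φ (nTorsion M n : Set M) (nTorsion N n : Set N))
    (hdivN : ∀ x : N, ∃ y : N, n • y = x)
    (b : ↥(fixedAddSubgroup G N)) :
    n • thetaFun n φ hφ hbij hdivN b = 0 := by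
  show n • (QuotientAddGroup.mk' _ ((pullCocycle n φ hφ hbij _ _))) = 0
  rw [← map_nsmul, pullCocycle_tors, map_zero]

lemma thetaFun_ker (n : ℕ) (φ : M →+ N)
    (hφ : ∀ (g : G) (x : M), φ (g • x) = g • φ x)
    (hbij : Set.BijOn φ (nTorsion M n : Set M) (nTorsion N n : Set N))
    (hdivN : ∀ x : N, ∃ y : N, n • y = x)
    (b : ↥(fixedAddSubgroup G N)) :
    H1Map (G := G) φ hφ (thetaFun n φ hφ hbij hdivN b) = 0 := by
  show H1Map (G := G) φ hφ (QuotientAddGroup.mk _) = 0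
  rw [H1Map, QuotientAddGroup.map_mk, QuotientAddGroup.eq_zero_iff,
    AddSubgroup.mem_addSubgroupOf]
  refine ⟨(hdivN (b : N)).choose, fun σ => ?_⟩
  show φ ((pullCocycle n φ hφ hbij _ _ : G → M) σ) = _
  rw [pullCocycle_apply, psi_spec n φ hbij]

lemma thetaFun_add (n : ℕ) (φ : M →+ N)
    (hφ : ∀ (g : G) (x : M), φ (g • x) = g • φ x)
    (hbij : Set.BijOn φ (nTorsion M n : Set M) (nTorsion N n : Set N))
    (hdivN : ∀ x : N, ∃ y : N, n • y = x)
    (a b : ↥(fixedAddSubgroup G N)) :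
    thetaFun n φ hφ hbij hdivN (a + b)
      = thetaFun n φ hφ hbij hdivN a + thetaFun n φ hφ hbij hdivN b := by
  have hya := (hdivN (a : N)).choose_spec
  have hyb := (hdivN (b : N)).choose_spec
  have hy : n • ((hdivN (a : N)).choose + (hdivN (b : N)).choose) = ((a + b : _) : N) := by
    rw [smul_add, hya, hyb]; rfl
  rw [thetaFun_eq n φ hφ hbij hdivN (a + b) _ hy]
  rw [pullCocycle_add n φ hφ hbij _ _
    (fun g => by rw [hya]; exact a.2 g) (fun g => by rw [hyb]; exact b.2 g)]
  show QuotientAddGroup.mk' _ (_ + _) = _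
  rw [map_add]
  rfl

/-- The connecting homomorphism `N^G → ker(H¹(G,M)[n] → H¹(G,N)[n])`. -/
noncomputable def theta (n : ℕ) (φ : M →+ N)
    (hφ : ∀ (g : G) (x : M), φ (g • x) = g • φ x)
    (hbij : Set.BijOn φ (nTorsion M n : Set M) (nTorsion N n : Set N))
    (hdivN : ∀ x : N, ∃ y : N, n • y = x) :
    ↥(fixedAddSubgroup G N) →+ ↥((torsMap n (H1Map (G := G) φ hφ)).ker) :=
  AddMonoidHom.mk' (fun b =>
    ⟨⟨thetaFun n φ hφ hbij hdivN b, thetaFun_tors n φ hφ hbij hdivN b⟩, by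
      rw [AddMonoidHom.mem_ker]
      exact Subtype.ext (thetaFun_ker n φ hφ hbij hdivN b)⟩)
    (fun a b => by
      apply Subtype.ext
      apply Subtype.ext
      exact thetaFun_add n φ hφ hbij hdivN a b)

lemma theta_surj (n : ℕ) (φ : M →+ N)
    (hφ : ∀ (g : G) (x : M), φ (g • x) = g • φ x)
    (hbij : Set.BijOn φ (nTorsion M n : Set M) (nTorsion N n : Set N))
    (hdivM : ∀ x : M, ∃ y : M, n • y = x)
    (hdivN : ∀ x : N, ∃ y : N, n • y = x) :
    Function.Surjective (theta n φ hφ hbij hdivN) := by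
  rintro ⟨⟨q, hq⟩, hker⟩
  obtain ⟨f, rfl⟩ := QuotientAddGroup.mk_surjective q
  -- extract the torsion data
  have hq' : QuotientAddGroup.mk (n • f) = (0 : H1 G M) := by
    show QuotientAddGroup.mk' _ (n • f) = 0
    rw [map_nsmul]
    exact hq
  rw [QuotientAddGroup.eq_zero_iff, AddSubgroup.mem_addSubgroupOf] at hq'
  obtain ⟨x, hx0⟩ := hq'
  have hx : ∀ σ : G, n • (f : G → M) σ = σ • x - x := fun σ => hx0 σ
  -- extract the kernel data
  have hker0 : H1Map (G := G) φ hφ (QuotientAddGroup.mk f) = 0 := by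
    have h1 := AddMonoidHom.mem_ker.mp hker
    exact congrArg Subtype.val h1
  rw [H1Map, QuotientAddGroup.map_mk, QuotientAddGroup.eq_zero_iff,
    AddSubgroup.mem_addSubgroupOf] at hker0
  obtain ⟨z, hz0⟩ := hker0
  have hz : ∀ σ : G, φ ((f : G → M) σ) = σ • z - z := fun σ => hz0 σ
  obtain ⟨w, hw⟩ := hdivM x
  -- the fixed element
  have hbfix : ∀ g : G, g • (n • z - φ x) = n • z - φ x := by
    intro g
    have e3 : n • (g • z - z) - φ (g • x - x) = 0 := by
      rw [← hz g, ← hx g, ← map_nsmul, sub_self]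
    have e4 : g • (n • z - φ x) - (n • z - φ x)
        = n • (g • z - z) - φ (g • x - x) := by
      rw [smul_sub, smul_comm g n z, ← hφ, smul_sub n, map_sub]
      abel
    rw [e3] at e4
    exact sub_eq_zero.1 e4
  refine ⟨⟨n • z - φ x, hbfix⟩, ?_⟩
  apply Subtype.ext
  apply Subtype.ext
  show thetaFun n φ hφ hbij hdivN _ = QuotientAddGroup.mk f
  have hy : n • (z - φ w) = ((⟨n • z - φ x, hbfix⟩ : ↥(fixedAddSubgroup G N)) : N) := by
    show n • (z - φ w) = n • z - φ x
    rw [smul_sub, ← map_nsmul, hw]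
  have hyfix : ∀ g : G, g • (n • (z - φ w)) = n • (z - φ w) := fun g => by
    rw [hy]; exact hbfix g
  rw [thetaFun_eq n φ hφ hbij hdivN _ (z - φ w) hy]
  apply (QuotientAddGroup.eq_iff_sub_mem).2
  rw [AddSubgroup.mem_addSubgroupOf]
  refine ⟨-w, fun σ => ?_⟩
  have hpull : (pullCocycle n φ hφ hbij (z - φ w) hyfix : G → M) σ
      = (f : G → M) σ - (σ • w - w) := by
    rw [pullCocycle_apply]
    apply psi_eq n φ hbij
    · rw [smul_sub, hx σ, smul_sub n, smul_comm n σ w, hw, sub_self]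
    · rw [map_sub, hz σ, map_sub, hφ]
      rw [smul_sub σ z (φ w)]
      abel
  show (pullCocycle n φ hφ hbij (z - φ w) hyfix : G → M) σ - (f : G → M) σ
      = σ • (-w) - (-w)
  rw [hpull, smul_neg]
  abel


lemma theta_ker (n : ℕ) (φ : M →+ N)
    (hφ : ∀ (g : G) (x : M), φ (g • x) = g • φ x)
    (hbij : Set.BijOn φ (nTorsion M n : Set M) (nTorsion N n : Set N))
    (hdivM : ∀ x : M, ∃ y : M, n • y = x)
    (hdivN : ∀ x : N, ∃ y : N, n • y = x) :
    (theta n φ hφ hbij hdivN).ker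
      = nMultiples ↥(fixedAddSubgroup G N) n ⊔ (fixedMap φ hφ).range := by
  apply le_antisymm
  · intro b hb
    set y₀ := (hdivN (b : N)).choose with hy₀def
    have hy₀ : n • y₀ = (b : N) := (hdivN (b : N)).choose_spec
    have hy₀fix : ∀ g : G, g • (n • y₀) = n • y₀ := fun g => by
      rw [hy₀]; exact b.2 g
    have hb0 : thetaFun n φ hφ hbij hdivN b = 0 := by
      have h1 := AddMonoidHom.mem_ker.mp hb
      have h2 := congrArg Subtype.val h1
      exact congrArg Subtype.val h2
    have hb1 := (QuotientAddGroup.eq_zero_iff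
      (pullCocycle n φ hφ hbij y₀ hy₀fix)).1 hb0
    rw [AddSubgroup.mem_addSubgroupOf] at hb1
    obtain ⟨x, hx0⟩ := hb1
    have hx : ∀ σ : G, (pullCocycle n φ hφ hbij y₀ hy₀fix : G → M) σ
        = σ • x - x := fun σ => hx0 σ
    have hnx : ∀ g : G, g • (n • x) = n • x := by
      intro g
      have ht : n • ((pullCocycle n φ hφ hbij y₀ hy₀fix : G → M) g) = 0 := by
        rw [pullCocycle_apply]; exact psi_tors n φ hbij _ _
      rw [hx g] at ht
      have e : g • (n • x) - n • x = n • (g • x - x) := by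
        rw [smul_sub n, smul_comm g n x]
      rw [ht] at e
      exact sub_eq_zero.1 e
    have hfix2 : ∀ g : G, g • (y₀ - φ x) = y₀ - φ x := by
      intro g
      have hsp : φ ((pullCocycle n φ hφ hbij y₀ hy₀fix : G → M) g)
          = g • y₀ - y₀ := by
        rw [pullCocycle_apply]; exact psi_spec n φ hbij _ _
      rw [hx g, map_sub, hφ] at hsp
      have e : g • (y₀ - φ x) - (y₀ - φ x) = (g • y₀ - y₀) - (g • φ x - φ x) := by
        rw [smul_sub g y₀]
        abel
      rw [← hsp] at e
      have e2 : g • (y₀ - φ x) - (y₀ - φ x) = 0 := by rw [e]; abel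
      exact sub_eq_zero.1 e2
    have hdecomp : b = (n • (⟨y₀ - φ x, hfix2⟩ : ↥(fixedAddSubgroup G N)))
        + fixedMap φ hφ ⟨n • x, hnx⟩ := by
      apply Subtype.ext
      show (b : N) = n • (y₀ - φ x) + φ (n • x)
      rw [smul_sub n, map_nsmul, sub_add_cancel, hy₀]
    rw [hdecomp]
    exact add_mem
      (AddSubgroup.mem_sup_left ⟨⟨y₀ - φ x, hfix2⟩, rfl⟩)
      (AddSubgroup.mem_sup_right ⟨⟨n • x, hnx⟩, rfl⟩)
  · apply sup_le
    · rintro _ ⟨c, rfl⟩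
      rw [AddMonoidHom.mem_ker]
      apply Subtype.ext
      apply Subtype.ext
      show thetaFun n φ hφ hbij hdivN _ = 0
      have hy : n • (c : N) = ((nsmulHom ↥(fixedAddSubgroup G N) n c : _) : N) := rfl
      rw [thetaFun_eq n φ hφ hbij hdivN _ (c : N) hy]
      apply (QuotientAddGroup.eq_zero_iff _).2
      rw [AddSubgroup.mem_addSubgroupOf]
      refine ⟨0, fun σ => ?_⟩
      show (pullCocycle n φ hφ hbij (c : N) _ : G → M) σ = σ • 0 - 0
      rw [pullCocycle_apply, smul_zero, sub_zero]
      exact psi_eq n φ hbij (smul_zero n) (by rw [map_zero, c.2 σ, sub_self])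
    · rintro _ ⟨x, rfl⟩
      rw [AddMonoidHom.mem_ker]
      apply Subtype.ext
      apply Subtype.ext
      show thetaFun n φ hφ hbij hdivN _ = 0
      obtain ⟨w, hw⟩ := hdivM (x : M)
      have hy : n • (φ w) = ((fixedMap φ hφ x : _) : N) := by
        rw [← map_nsmul, hw]; rfl
      rw [thetaFun_eq n φ hφ hbij hdivN _ (φ w) hy]
      apply (QuotientAddGroup.eq_zero_iff _).2
      rw [AddSubgroup.mem_addSubgroupOf]
      refine ⟨w, fun σ => ?_⟩
      show (pullCocycle n φ hφ hbij (φ w) _ : G → M) σ = σ • w - w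
      rw [pullCocycle_apply]
      apply psi_eq n φ hbij
      · rw [smul_sub n, smul_comm n σ w, hw, x.2 σ, sub_self]
      · rw [map_sub, hφ]

end Aux

/-- Let `φ : M → N` be a morphism of `n`-divisible `G`-modules
restricting to an isomorphism `M[n] → N[n]`. Then the kernel of the induced
homomorphism `H¹(G, M)[n] → H¹(G, N)[n]` is isomorphic to the cokernel of the
induced homomorphism `M^G/n·M^G → N^G/n·N^G`, i.e. to
`N^G / (n·N^G + φ(M^G))`. -/
theorem ker_H1_torsion_map_iso_coker
    (G M N : Type) [Group G] [AddCommGroup M] [DistribMulAction G M]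
    [AddCommGroup N] [DistribMulAction G N] (n : ℕ) (hn : 0 < n)
    (φ : M →+ N) (hφ : ∀ (g : G) (x : M), φ (g • x) = g • φ x)
    (hdivM : ∀ x : M, ∃ y : M, n • y = x) (hdivN : ∀ x : N, ∃ y : N, n • y = x)
    (hbij : Set.BijOn φ (nTorsion M n : Set M) (nTorsion N n : Set N)) :
    Nonempty (↥((torsMap n (H1Map (G := G) φ hφ)).ker) ≃+
      (↥(fixedAddSubgroup G N) ⧸
        (nMultiples ↥(fixedAddSubgroup G N) n ⊔ (fixedMap φ hφ).range))) := by
  exact ⟨((QuotientAddGroup.quotientKerEquivOfSurjective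
      (theta n φ hφ hbij hdivN)
      (theta_surj n φ hφ hbij hdivM hdivN)).symm.trans
    (QuotientAddGroup.quotientAddEquivOfEq
      (theta_ker n φ hφ hbij hdivM hdivN)))⟩
end

section
/- Let G be a group, n a positive integer, and φ : M → N a morphism of G-modules such that M and N are both n-divisible and φ restricts to an isomorphism of G-modules M[n] → N[n]. Then there exists a surjective group homomorphism from N^G/n·N^G onto the kernel of the induced homomorphism H^1(G, M)[n] → H^1(G, N)[n]; in particular, if N^G/n·N^G is finite, then this kernel is finite. -/
section AuxProof

variable {G M N : Type} [Group G] [AddCommGroup M] [DistribMulAction G M]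
  [AddCommGroup N] [DistribMulAction G N] {n : ℕ}
  (φ : M →+ N) (hφ : ∀ (g : G) (x : M), φ (g • x) = g • φ x)
  (hbij : Set.BijOn φ (nTorsion M n : Set M) (nTorsion N n : Set N))

lemma mem_nTorsion_iff {A : Type} [AddCommGroup A] {x : A} :
    x ∈ nTorsion A n ↔ n • x = 0 := Iff.rfl

lemma smul_mem_nTorsion {x : M} (g : G) (hx : x ∈ nTorsion M n) :
    g • x ∈ nTorsion M n := by
  rw [mem_nTorsion_iff] at hx ⊢
  rw [smul_comm, hx, smul_zero]

/-- The inverse of `φ` on `n`-torsion. -/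
noncomputable def psiAux (x : N) (hx : x ∈ nTorsion N n) : M :=
  (hbij.2.2 hx).choose

lemma psiAux_mem (x : N) (hx : x ∈ nTorsion N n) :
    psiAux φ hbij x hx ∈ nTorsion M n := (hbij.2.2 hx).choose_spec.1

lemma phi_psiAux (x : N) (hx : x ∈ nTorsion N n) :
    φ (psiAux φ hbij x hx) = x := (hbij.2.2 hx).choose_spec.2

lemma psiAux_eq (x : N) (hx : x ∈ nTorsion N n) (m : M)
    (hm : m ∈ nTorsion M n) (h : φ m = x) : psiAux φ hbij x hx = m :=
  hbij.2.1 (psiAux_mem φ hbij x hx) hm (by rw [phi_psiAux, h])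

lemma kummer_tors {x : N} (hx : n • x ∈ fixedAddSubgroup G N) (σ : G) :
    σ • x - x ∈ nTorsion N n := by
  rw [mem_nTorsion_iff, smul_sub, ← smul_comm σ n x, hx σ, sub_self]

/-- The Kummer cocycle of `x` pulled back through `φ⁻¹` on torsion. -/
noncomputable def liftCocycleAux (x : N) (hx : n • x ∈ fixedAddSubgroup G N) :
    oneCocycles G M :=
  ⟨fun σ => psiAux φ hbij (σ • x - x) (kummer_tors hx σ),
   fun σ τ => by
      refine psiAux_eq φ hbij _ _ _ ?_ ?_
      · exact (nTorsion M n).add_mem (psiAux_mem φ hbij _ _)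
          (smul_mem_nTorsion σ (psiAux_mem φ hbij _ _))
      · rw [map_add, hφ, phi_psiAux, phi_psiAux, mul_smul, smul_sub]
        abel⟩

lemma liftCocycleAux_apply (x : N) (hx : n • x ∈ fixedAddSubgroup G N) (σ : G) :
    ((liftCocycleAux φ hφ hbij x hx : oneCocycles G M) : G → M) σ
      = psiAux φ hbij (σ • x - x) (kummer_tors hx σ) := rfl

lemma nsmul_liftCocycleAux (x : N) (hx : n • x ∈ fixedAddSubgroup G N) :
    n • liftCocycleAux φ hφ hbij x hx = 0 := by
  apply Subtype.ext
  funext σ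
  show n • psiAux φ hbij (σ • x - x) (kummer_tors hx σ) = 0
  exact psiAux_mem φ hbij _ _

lemma H1mk_nsmul_liftCocycleAux (x : N) (hx : n • x ∈ fixedAddSubgroup G N) :
    n • H1mk G M (liftCocycleAux φ hφ hbij x hx) = 0 := by
  have h1 : H1mk G M (liftCocycleAux φ hφ hbij x hx)
      = QuotientAddGroup.mk' _ (liftCocycleAux φ hφ hbij x hx) := rfl
  rw [h1, ← map_nsmul, nsmul_liftCocycleAux, map_zero]

lemma map_liftCocycleAux_mem (x : N) (hx : n • x ∈ fixedAddSubgroup G N) :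
    oneCocyclesMap φ hφ (liftCocycleAux φ hφ hbij x hx)
      ∈ (oneCoboundaries G N).addSubgroupOf (oneCocycles G N) := by
  rw [AddSubgroup.mem_addSubgroupOf]
  exact ⟨x, fun σ => phi_psiAux φ hbij (σ • x - x) (kummer_tors hx σ)⟩

lemma liftCocycleAux_congr (x x' : N) (hx : n • x ∈ fixedAddSubgroup G N)
    (hx' : n • x' ∈ fixedAddSubgroup G N) (h : n • x = n • x') :
    H1mk G M (liftCocycleAux φ hφ hbij x hx)
      = H1mk G M (liftCocycleAux φ hφ hbij x' hx') := by
  have hxt : x' - x ∈ nTorsion N n := by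
    rw [mem_nTorsion_iff, smul_sub, h, sub_self]
  set t : M := psiAux φ hbij (x' - x) hxt with ht
  refine QuotientAddGroup.eq.mpr ?_
  rw [AddSubgroup.mem_addSubgroupOf]
  refine ⟨t, fun σ => ?_⟩
  show -psiAux φ hbij (σ • x - x) (kummer_tors hx σ)
      + psiAux φ hbij (σ • x' - x') (kummer_tors hx' σ) = σ • t - t
  refine hbij.2.1 ?_ ?_ ?_
  · exact (nTorsion M n).add_mem ((nTorsion M n).neg_mem (psiAux_mem φ hbij _ _))
      (psiAux_mem φ hbij _ _)
  · exact (nTorsion M n).sub_mem (smul_mem_nTorsion σ (psiAux_mem φ hbij _ _))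
      (psiAux_mem φ hbij _ _)
  · rw [map_add, map_neg, map_sub, hφ, phi_psiAux, phi_psiAux, phi_psiAux, smul_sub]
    abel

lemma liftCocycleAux_add (x x' : N) (hx : n • x ∈ fixedAddSubgroup G N)
    (hx' : n • x' ∈ fixedAddSubgroup G N)
    (hxx' : n • (x + x') ∈ fixedAddSubgroup G N) :
    liftCocycleAux φ hφ hbij (x + x') hxx'
      = liftCocycleAux φ hφ hbij x hx + liftCocycleAux φ hφ hbij x' hx' := by
  apply Subtype.ext
  funext σ
  show psiAux φ hbij (σ • (x + x') - (x + x')) (kummer_tors hxx' σ)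
    = psiAux φ hbij (σ • x - x) (kummer_tors hx σ)
      + psiAux φ hbij (σ • x' - x') (kummer_tors hx' σ)
  refine psiAux_eq φ hbij _ _ _ ?_ ?_
  · exact (nTorsion M n).add_mem (psiAux_mem φ hbij _ _) (psiAux_mem φ hbij _ _)
  · rw [map_add, phi_psiAux, phi_psiAux, smul_add]
    abel

lemma liftCocycleAux_fixed (x : N) (hxf : x ∈ fixedAddSubgroup G N)
    (hx : n • x ∈ fixedAddSubgroup G N) :
    liftCocycleAux φ hφ hbij x hx = 0 := by
  apply Subtype.ext
  funext σ
  show psiAux φ hbij (σ • x - x) (kummer_tors hx σ) = 0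
  refine psiAux_eq φ hbij _ _ _ (zero_mem _) ?_
  rw [map_zero, hxf σ, sub_self]

end AuxProof
/-- Let `φ : M → N` be a morphism of `n`-divisible `G`-modules
restricting to an isomorphism `M[n] → N[n]`. Then there is a surjective group
homomorphism from `N^G/n·N^G` onto the kernel of the induced homomorphism
`H¹(G, M)[n] → H¹(G, N)[n]`; in particular, if `N^G/n·N^G` is finite, then
this kernel is finite. -/
theorem exists_surjection_onto_ker_H1_torsion_map
    (G M N : Type) [Group G] [AddCommGroup M] [DistribMulAction G M]
    [AddCommGroup N] [DistribMulAction G N] (n : ℕ) (hn : 0 < n)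
    (φ : M →+ N) (hφ : ∀ (g : G) (x : M), φ (g • x) = g • φ x)
    (hdivM : ∀ x : M, ∃ y : M, n • y = x) (hdivN : ∀ x : N, ∃ y : N, n • y = x)
    (hbij : Set.BijOn φ (nTorsion M n : Set M) (nTorsion N n : Set N)) :
    (∃ π : (↥(fixedAddSubgroup G N) ⧸ nMultiples ↥(fixedAddSubgroup G N) n) →+
        ↥((torsMap n (H1Map (G := G) φ hφ)).ker),
      Function.Surjective π) ∧
    (Finite (↥(fixedAddSubgroup G N) ⧸ nMultiples ↥(fixedAddSubgroup G N) n) →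
      Finite ↥((torsMap n (H1Map (G := G) φ hφ)).ker)) := by
  classical
  have hfix : ∀ y : ↥(fixedAddSubgroup G N),
      n • (hdivN (y : N)).choose ∈ fixedAddSubgroup G N := fun y => by
    rw [(hdivN (y : N)).choose_spec]; exact y.2
  have tors : ∀ (x : N) (hx : n • x ∈ fixedAddSubgroup G N),
      H1mk G M (liftCocycleAux φ hφ hbij x hx) ∈ nTorsion (H1 G M) n :=
    fun x hx => H1mk_nsmul_liftCocycleAux φ hφ hbij x hx
  have kermem : ∀ (x : N) (hx : n • x ∈ fixedAddSubgroup G N),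
      (⟨H1mk G M (liftCocycleAux φ hφ hbij x hx), tors x hx⟩ :
        ↥(nTorsion (H1 G M) n)) ∈ (torsMap n (H1Map (G := G) φ hφ)).ker := by
    intro x hx
    rw [AddMonoidHom.mem_ker]
    apply Subtype.ext
    show H1Map (G := G) φ hφ (H1mk G M (liftCocycleAux φ hφ hbij x hx)) = 0
    have h1 : H1Map (G := G) φ hφ (H1mk G M (liftCocycleAux φ hφ hbij x hx))
        = H1mk G N (oneCocyclesMap φ hφ (liftCocycleAux φ hφ hbij x hx)) := rfl
    rw [h1]
    exact (QuotientAddGroup.eq_zero_iff _).mpr (map_liftCocycleAux_mem φ hφ hbij x hx)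
  -- the homomorphism on `N^G`
  have hadd : ∀ y y' : ↥(fixedAddSubgroup G N),
      (⟨⟨H1mk G M (liftCocycleAux φ hφ hbij (hdivN ((y + y' : _) : N)).choose
          (hfix (y + y'))), tors _ _⟩, kermem _ _⟩ :
        ↥((torsMap n (H1Map (G := G) φ hφ)).ker))
      = ⟨⟨H1mk G M (liftCocycleAux φ hφ hbij (hdivN (y : N)).choose (hfix y)),
          tors _ _⟩, kermem _ _⟩
        + ⟨⟨H1mk G M (liftCocycleAux φ hφ hbij (hdivN ((y' : _) : N)).choose
            (hfix y')), tors _ _⟩, kermem _ _⟩ := by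
    intro y y'
    apply Subtype.ext; apply Subtype.ext
    have hsum : n • ((hdivN (y : N)).choose + (hdivN ((y' : _) : N)).choose)
        ∈ fixedAddSubgroup G N := by
      rw [smul_add, (hdivN (y : N)).choose_spec, (hdivN ((y' : _) : N)).choose_spec]
      exact (fixedAddSubgroup G N).add_mem y.2 y'.2
    show H1mk G M (liftCocycleAux φ hφ hbij (hdivN ((y + y' : _) : N)).choose
          (hfix (y + y')))
        = H1mk G M (liftCocycleAux φ hφ hbij (hdivN (y : N)).choose (hfix y))
          + H1mk G M (liftCocycleAux φ hφ hbij (hdivN ((y' : _) : N)).choose (hfix y'))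
    have hcongr := liftCocycleAux_congr φ hφ hbij _ _ (hfix (y + y')) hsum (by
      rw [(hdivN ((y + y' : _) : N)).choose_spec, smul_add,
        (hdivN (y : N)).choose_spec, (hdivN ((y' : _) : N)).choose_spec]
      rfl)
    rw [hcongr, liftCocycleAux_add φ hφ hbij _ _ (hfix y) (hfix y') hsum]
    exact map_add (QuotientAddGroup.mk' _) _ _
  let p : ↥(fixedAddSubgroup G N) →+ ↥((torsMap n (H1Map (G := G) φ hφ)).ker) :=
    AddMonoidHom.mk' (fun y =>
      ⟨⟨H1mk G M (liftCocycleAux φ hφ hbij (hdivN (y : N)).choose (hfix y)),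
        tors _ _⟩, kermem _ _⟩) hadd
  have hker : nMultiples ↥(fixedAddSubgroup G N) n ≤ p.ker := by
    rintro y ⟨w, rfl⟩
    rw [AddMonoidHom.mem_ker]
    apply Subtype.ext; apply Subtype.ext
    have hwN : ((nsmulHom ↥(fixedAddSubgroup G N) n w : _) : N) = n • (w : N) := rfl
    have hwfix : n • (w : N) ∈ fixedAddSubgroup G N := fun g => by
      rw [smul_comm g n (w : N), w.2 g]
    show H1mk G M (liftCocycleAux φ hφ hbij
        (hdivN ((nsmulHom ↥(fixedAddSubgroup G N) n w : _) : N)).choose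
        (hfix _)) = 0
    have hcongr := liftCocycleAux_congr φ hφ hbij
      (hdivN ((nsmulHom ↥(fixedAddSubgroup G N) n w : _) : N)).choose ((w : _) : N)
      (hfix (nsmulHom ↥(fixedAddSubgroup G N) n w)) hwfix (by
        rw [(hdivN _).choose_spec]; exact hwN)
    rw [hcongr, liftCocycleAux_fixed φ hφ hbij _ w.2 hwfix]
    exact map_zero (QuotientAddGroup.mk' _)
  have hsurj : Function.Surjective p := by
    rintro ⟨⟨cbar, hctors⟩, hcker⟩
    obtain ⟨c, rfl⟩ := QuotientAddGroup.mk_surjective cbar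
    have h1 : H1mk G M (n • c) = 0 := by
      have h0 : H1mk G M (n • c) = n • H1mk G M c :=
        map_nsmul (QuotientAddGroup.mk' _) _ _
      rw [h0]; exact hctors
    have h2 := (QuotientAddGroup.eq_zero_iff _).mp h1
    rw [AddSubgroup.mem_addSubgroupOf] at h2
    obtain ⟨m, hm⟩ := h2
    have hm' : ∀ σ : G, n • ((c : G → M) σ) = σ • m - m := fun σ => by
      have := hm σ
      simpa using this
    rw [AddMonoidHom.mem_ker] at hcker
    have h3 : H1mk G N (oneCocyclesMap φ hφ c) = 0 := Subtype.ext_iff.mp hcker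
    have h4 := (QuotientAddGroup.eq_zero_iff _).mp h3
    rw [AddSubgroup.mem_addSubgroupOf] at h4
    obtain ⟨x, hx⟩ := h4
    have hx' : ∀ σ : G, φ ((c : G → M) σ) = σ • x - x := fun σ => hx σ
    obtain ⟨z, hz⟩ := hdivM m
    have keytors : ∀ σ : G, (c : G → M) σ - (σ • z - z) ∈ nTorsion M n := fun σ => by
      rw [mem_nTorsion_iff, smul_sub, hm' σ, smul_sub, ← smul_comm σ n z, hz]
      abel
    have key : ∀ σ : G, σ • (x - φ z) - (x - φ z) = φ ((c : G → M) σ - (σ • z - z)) :=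
      fun σ => by
        rw [map_sub, map_sub, hφ, hx' σ, smul_sub]
        abel
    have hyfix : n • (x - φ z) ∈ fixedAddSubgroup G N := fun g => by
      have h5 : g • (n • (x - φ z)) - n • (x - φ z) = 0 := by
        rw [smul_comm g n (x - φ z), ← smul_sub, key g, ← map_nsmul, keytors g,
          map_zero]
      rw [sub_eq_zero] at h5
      exact h5
    refine ⟨⟨n • (x - φ z), hyfix⟩, ?_⟩
    apply Subtype.ext; apply Subtype.ext
    show H1mk G M (liftCocycleAux φ hφ hbij
        (hdivN ((⟨n • (x - φ z), hyfix⟩ : ↥(fixedAddSubgroup G N)) : N)).choose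
        (hfix _)) = H1mk G M c
    have hcongr := liftCocycleAux_congr φ hφ hbij
      (hdivN ((⟨n • (x - φ z), hyfix⟩ : ↥(fixedAddSubgroup G N)) : N)).choose
      (x - φ z) (hfix ⟨n • (x - φ z), hyfix⟩) hyfix
      ((hdivN ((⟨n • (x - φ z), hyfix⟩ : ↥(fixedAddSubgroup G N)) : N)).choose_spec)
    rw [hcongr]
    refine QuotientAddGroup.eq.mpr ?_
    rw [AddSubgroup.mem_addSubgroupOf]
    refine ⟨z, fun σ => ?_⟩
    show -(psiAux φ hbij (σ • (x - φ z) - (x - φ z)) (kummer_tors hyfix σ))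
        + (c : G → M) σ = σ • z - z
    rw [psiAux_eq φ hbij _ _ ((c : G → M) σ - (σ • z - z)) (keytors σ) (key σ).symm]
    abel
  let π := QuotientAddGroup.lift (nMultiples ↥(fixedAddSubgroup G N) n) p hker
  have hπ : Function.Surjective π := by
    intro k
    obtain ⟨y, hy⟩ := hsurj k
    exact ⟨QuotientAddGroup.mk y, hy⟩
  exact ⟨⟨π, hπ⟩, fun hfin => Finite.of_surjective π hπ⟩
end
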